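/- Let A ∈ ℝ^{m×n}, b ∈ ℝ^m with Ax = b consistent, B ∈ ℝ^{n×n} symmetric positive definite, Q ∈ ℝ^{d×m}, and let x^0 satisfy QAx^0 = Qb. Let x* be the minimizer of ||x − x^0||_B over all x with Ax = b. Let P := I − (Q A B^{−1/2})† Q A B^{−1/2}, and for a sketching matrix S ∈ ℝ^{ℓ×m} let Z := P B^{−1/2} Aᵀ Sᵀ (S A B^{−1/2} P B^{−1/2} Aᵀ Sᵀ)† S A B^{−1/2} P, the orthogonal projector onto range(P B^{−1/2} Aᵀ Sᵀ). If x^{k+1} is the minimizer of ||x − x^k||_B subject to SAx = Sb and QAx = Qb, then B^{1/2}(x^{k+1} − x*) = (I − Z) B^{1/2}(x^k − x*). -/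

import Mathlib

open Matrix

/-- `Mp` is the Moore–Penrose pseudoinverse of `M` (the four Penrose conditions,
which characterize it uniquely). -/
def IsMoorePenrose {k l : Type*} [Fintype k] [Fintype l]
    (M : Matrix k l ℝ) (Mp : Matrix l k ℝ) : Prop :=
  M * Mp * M = M ∧ Mp * M * Mp = Mp ∧ (M * Mp)ᵀ = M * Mp ∧ (Mp * M)ᵀ = Mp * M

/-- The positive semidefinite square root, as `Matrix.PosSemidef.sqrt` was defined in
Mathlib (Dec 2024), specialized to `ℝ`; it has since been removed from Mathlib. -/
noncomputable def Matrix.PosSemidef.sqrt {n : Type*} [Fintype n] [DecidableEq n]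
    {A : Matrix n n ℝ} (hA : A.PosSemidef) : Matrix n n ℝ :=
  hA.1.eigenvectorUnitary.1 * diagonal ((↑) ∘ (√·) ∘ hA.1.eigenvalues) *
  (star hA.1.eigenvectorUnitary : Matrix n n ℝ)

lemma Matrix.PosSemidef.sqrt_mul_self' {n : Type*} [Fintype n] [DecidableEq n]
    {A : Matrix n n ℝ} (hA : A.PosSemidef) : hA.sqrt * hA.sqrt = A := by
  unfold Matrix.PosSemidef.sqrt
  have hU : (star hA.1.eigenvectorUnitary : Matrix n n ℝ) * hA.1.eigenvectorUnitary.1 = 1 := by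
    simp
  calc _ = hA.1.eigenvectorUnitary.1 * diagonal ((↑) ∘ (√·) ∘ hA.1.eigenvalues) *
        ((star hA.1.eigenvectorUnitary : Matrix n n ℝ) * hA.1.eigenvectorUnitary.1) *
        diagonal ((↑) ∘ (√·) ∘ hA.1.eigenvalues) *
        (star hA.1.eigenvectorUnitary : Matrix n n ℝ) := by simp only [Matrix.mul_assoc]
    _ = hA.1.eigenvectorUnitary.1 * diagonal (RCLike.ofReal ∘ hA.1.eigenvalues) *
        (star hA.1.eigenvectorUnitary : Matrix n n ℝ) := by
      rw [hU, Matrix.mul_one, Matrix.mul_assoc _ (diagonal _) (diagonal _), diagonal_mul_diagonal]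
      congr 3
      funext i
      simp [Real.mul_self_sqrt (hA.eigenvalues_nonneg i)]
    _ = A := by
      conv_rhs => rw [hA.1.spectral_theorem]
      simp [Unitary.conjStarAlgAut_apply]

lemma Matrix.PosSemidef.sqrt_isHermitian' {n : Type*} [Fintype n] [DecidableEq n]
    {A : Matrix n n ℝ} (hA : A.PosSemidef) : hA.sqrt.IsHermitian := by
  unfold Matrix.PosSemidef.sqrt
  have h := isHermitian_mul_mul_conjTranspose hA.1.eigenvectorUnitary.1
    (isHermitian_diagonal ((↑) ∘ (√·) ∘ hA.1.eigenvalues : n → ℝ))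
  simpa [star_eq_conjTranspose] using h

lemma tr_mul_self_zero {a c : ℕ} (D : Matrix (Fin a) (Fin c) ℝ)
    (h : Dᵀ * D = 0) : D = 0 := by
  have hh : Dᴴ * D = 0 := by
    have : Dᴴ = Dᵀ := by ext i j; simp [conjTranspose_apply]
    rw [this]; exact h
  exact Matrix.conjTranspose_mul_self_eq_zero.mp hh

lemma pinv_fix {a c : ℕ} (G : Matrix (Fin a) (Fin c) ℝ)
    (H N : Matrix (Fin a) (Fin a) ℝ) (hH : H = G * Gᵀ)
    (h1 : H * N * H = H) (h4 : (N * H)ᵀ = N * H) :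
    Gᵀ * N * H = Gᵀ := by
  have hHsymm : Hᵀ = H := by rw [hH, transpose_mul, transpose_transpose]
  have hHNt : H * Nᵀ = N * H := by
    calc H * Nᵀ = (N * Hᵀ)ᵀ := by rw [transpose_mul, transpose_transpose]
    _ = (N * H)ᵀ := by rw [hHsymm]
    _ = N * H := h4
  have h1' : H * (N * H) = H := by rw [← Matrix.mul_assoc]; exact h1
  have hGG : ∀ X : Matrix (Fin a) (Fin a) ℝ, G * (Gᵀ * X) = H * X := by
    intro X; rw [← Matrix.mul_assoc, ← hH]
  set D := Gᵀ * N * H - Gᵀ with hD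
  have hDt : Dᵀ = H * Nᵀ * G - G := by
    rw [hD, transpose_sub, transpose_mul, transpose_mul, transpose_transpose, hHsymm,
      Matrix.mul_assoc]
  have expand : Dᵀ * D
      = H * (Nᵀ * (G * (Gᵀ * (N * H)))) - H * (Nᵀ * (G * Gᵀ)) - G * (Gᵀ * (N * H))
        + G * Gᵀ := by
    rw [hDt, hD]
    simp only [Matrix.sub_mul, Matrix.mul_sub, Matrix.mul_assoc]
    abel
  simp only [hGG, ← hH] at expand
  have hDtD : Dᵀ * D = 0 := by
    rw [expand, h1']
    abel
  have h0 := tr_mul_self_zero D hDtD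
  rw [hD] at h0
  exact sub_eq_zero.mp h0

lemma mem_sum_ranges {n l d : ℕ} (C1 : Matrix (Fin l) (Fin n) ℝ)
    (C2 : Matrix (Fin d) (Fin n) ℝ) (w : Fin n → ℝ)
    (h : ∀ v : Fin n → ℝ, C1 *ᵥ v = 0 → C2 *ᵥ v = 0 → w ⬝ᵥ v = 0) :
    ∃ y z, w = C1ᵀ *ᵥ y + C2ᵀ *ᵥ z := by
  classical
  let E := EuclideanSpace ℝ (Fin n)
  let e : (Fin n → ℝ) ≃ₗ[ℝ] E := (WithLp.linearEquiv 2 ℝ (Fin n → ℝ)).symm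
  have einner : ∀ a b : Fin n → ℝ, (inner ℝ (e a) (e b) : ℝ) = a ⬝ᵥ b := by
    intro a b
    rw [EuclideanSpace.inner_eq_star_dotProduct, dotProduct_comm]
    rfl
  let f1 : (Fin l → ℝ) →ₗ[ℝ] E := e.toLinearMap ∘ₗ Matrix.mulVecLin C1ᵀ
  let f2 : (Fin d → ℝ) →ₗ[ℝ] E := e.toLinearMap ∘ₗ Matrix.mulVecLin C2ᵀ
  let K : Submodule ℝ E := LinearMap.range f1 ⊔ LinearMap.range f2
  obtain ⟨u, hu, v, hv, huv⟩ := K.exists_add_mem_mem_orthogonal (e w)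
  have hvperp : ∀ x ∈ K, (inner ℝ x v : ℝ) = 0 := fun x hx =>
    (Submodule.mem_orthogonal K v).mp hv x hx
  set vv : Fin n → ℝ := e.symm v with hvv
  have hev : e vv = v := e.apply_symm_apply v
  have hC1v : C1 *ᵥ vv = 0 := by
    funext i
    have h1 : e (C1ᵀ *ᵥ Pi.single i 1) ∈ K :=
      Submodule.mem_sup_left ⟨Pi.single i 1, rfl⟩
    have := hvperp _ h1
    rw [← hev, einner] at this
    rw [Matrix.mulVec_transpose, ← Matrix.dotProduct_mulVec] at this
    simpa [single_dotProduct] using this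
  have hC2v : C2 *ᵥ vv = 0 := by
    funext i
    have h1 : e (C2ᵀ *ᵥ Pi.single i 1) ∈ K :=
      Submodule.mem_sup_right ⟨Pi.single i 1, rfl⟩
    have := hvperp _ h1
    rw [← hev, einner] at this
    rw [Matrix.mulVec_transpose, ← Matrix.dotProduct_mulVec] at this
    simpa [single_dotProduct] using this
  have hwv : w ⬝ᵥ vv = 0 := h vv hC1v hC2v
  have hv0 : v = 0 := by
    have h2 : (inner ℝ (e w) v : ℝ) = inner ℝ v v := by
      rw [huv, inner_add_left, hvperp u hu, zero_add]
    rw [← hev, einner] at h2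
    rw [hwv] at h2
    exact inner_self_eq_zero.mp h2.symm
  have hwK : e w ∈ K := by
    rw [huv, hv0, add_zero]; exact hu
  obtain ⟨x1, hx1, x2, hx2, hx12⟩ := Submodule.mem_sup.mp hwK
  obtain ⟨y, hy⟩ := hx1
  obtain ⟨z, hz⟩ := hx2
  refine ⟨y, z, ?_⟩
  have : e w = e (C1ᵀ *ᵥ y + C2ᵀ *ᵥ z) := by
    rw [map_add, ← hx12, ← hy, ← hz]; rfl
  exact e.injective this

lemma quad_zero (c q : ℝ) (hq : 0 ≤ q) (h : ∀ t : ℝ, 0 ≤ 2*t*c + t^2*q) : c = 0 := by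
  by_contra hc
  have hq1 : 0 < q + 1 := by linarith
  have hc2 : 0 < c^2 := by positivity
  have ht := h (-c/(q+1))
  have key : (2*(-c/(q+1))*c + (-c/(q+1))^2*q) * (q+1)^2 = -(c^2*(q+2)) := by
    field_simp
    ring
  have h2 : 0 ≤ -(c^2*(q+2)) := by
    rw [← key]
    exact mul_nonneg ht (sq_nonneg _)
  nlinarith


/-- fixed-point form of subspace-constrained sketch-and-project.
With `x*` the `B`-norm projection of `x0` onto `{x : Ax = b}` and
`Z = P B^{−1/2} Aᵀ Sᵀ (S A B^{−1/2} P B^{−1/2} Aᵀ Sᵀ)† S A B^{−1/2} P`, one step of the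
constrained method satisfies `B^{1/2}(x^{k+1} − x*) = (I − Z) B^{1/2}(x^k − x*)`. -/
theorem stmt_1 {m n d l : ℕ}
    (A : Matrix (Fin m) (Fin n) ℝ) (b : Fin m → ℝ)
    (hconsistent : ∃ x, A *ᵥ x = b)
    (B : Matrix (Fin n) (Fin n) ℝ) (hB : B.PosDef)
    (Q : Matrix (Fin d) (Fin m) ℝ) (S : Matrix (Fin l) (Fin m) ℝ)
    -- `Bh = B^{1/2}` and `Bih = B^{-1/2}`
    (Bh : Matrix (Fin n) (Fin n) ℝ) (hBh : Bh = hB.posSemidef.sqrt)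
    (Bih : Matrix (Fin n) (Fin n) ℝ) (hBih : Bih = (hB.posSemidef.sqrt)⁻¹)
    -- `N1 = (Q A B^{-1/2})†` and `P = I - N1 (Q A B^{-1/2})`
    (N1 : Matrix (Fin n) (Fin d) ℝ) (hN1 : IsMoorePenrose (Q * A * Bih) N1)
    (P : Matrix (Fin n) (Fin n) ℝ) (hP : P = 1 - N1 * (Q * A * Bih))
    -- `N2 = (S A B^{-1/2} P B^{-1/2} Aᵀ Sᵀ)†` and the projector `Z`
    (N2 : Matrix (Fin l) (Fin l) ℝ)
    (hN2 : IsMoorePenrose (S * A * Bih * P * Bih * Aᵀ * Sᵀ) N2)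
    (Z : Matrix (Fin n) (Fin n) ℝ)
    (hZ : Z = P * Bih * Aᵀ * Sᵀ * N2 * (S * A * Bih * P))
    -- the initial iterate satisfies `Q A x0 = Q b`
    (x0 : Fin n → ℝ) (hx0 : (Q * A) *ᵥ x0 = Q *ᵥ b)
    -- `x*` is the minimizer of `‖x - x0‖_B` over `{x : Ax = b}`
    (xstar : Fin n → ℝ) (hxstar_sol : A *ᵥ xstar = b)
    (hxstar_min : ∀ y : Fin n → ℝ, A *ᵥ y = b →
      (xstar - x0) ⬝ᵥ (B *ᵥ (xstar - x0)) ≤ (y - x0) ⬝ᵥ (B *ᵥ (y - x0)))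
    -- the current iterate satisfies `Q A xk = Q b`
    (xk xk1 : Fin n → ℝ) (hxk : (Q * A) *ᵥ xk = Q *ᵥ b)
    -- `xk1` is the minimizer of `‖x - xk‖_B` subject to `SAx = Sb`, `QAx = Qb`
    (hxk1S : (S * A) *ᵥ xk1 = S *ᵥ b)
    (hxk1Q : (Q * A) *ᵥ xk1 = Q *ᵥ b)
    (hxk1min : ∀ y : Fin n → ℝ, (S * A) *ᵥ y = S *ᵥ b → (Q * A) *ᵥ y = Q *ᵥ b →
      (xk1 - xk) ⬝ᵥ (B *ᵥ (xk1 - xk)) ≤ (y - xk) ⬝ᵥ (B *ᵥ (y - xk))) :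
    Bh *ᵥ (xk1 - xstar) = (1 - Z) *ᵥ (Bh *ᵥ (xk - xstar)) := by
  classical
  obtain ⟨p1, p2, p3, p4⟩ := hN1
  -- basic facts about Bh, Bih
  have conj_eq : ∀ (M : Matrix (Fin n) (Fin n) ℝ), Mᴴ = Mᵀ := by
    intro M; ext i j; simp [conjTranspose_apply]
  have hBsq : Bh * Bh = B := by rw [hBh]; exact hB.posSemidef.sqrt_mul_self'
  have hBhsym : Bhᵀ = Bh := by
    rw [hBh, ← conj_eq]; exact hB.posSemidef.sqrt_isHermitian'
  have hdet : IsUnit Bh.det := by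
    have hBdet : 0 < B.det := hB.det_pos
    rw [← hBsq, Matrix.det_mul] at hBdet
    have : Bh.det ≠ 0 := by intro h0; rw [h0] at hBdet; simp at hBdet
    exact isUnit_iff_ne_zero.mpr this
  have hBih_eq : Bih = Bh⁻¹ := by rw [hBih, hBh]
  have hBihBh : Bih * Bh = 1 := by rw [hBih_eq]; exact Matrix.nonsing_inv_mul Bh hdet
  have hBhBih : Bh * Bih = 1 := by rw [hBih_eq]; exact Matrix.mul_nonsing_inv Bh hdet
  have hBihsym : Bihᵀ = Bih := by
    rw [hBih_eq, Matrix.transpose_nonsing_inv, hBhsym]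
  have hBihB : Bih * B = Bh := by
    rw [← hBsq, ← Matrix.mul_assoc, hBihBh, Matrix.one_mul]
  -- facts about P
  have hPt : Pᵀ = P := by rw [hP, transpose_sub, transpose_one, p4]
  have hPP : P * P = P := by
    rw [hP]
    have e : N1 * (Q * A * Bih) * (N1 * (Q * A * Bih)) = N1 * (Q * A * Bih) := by
      rw [← Matrix.mul_assoc, p2]
    simp only [Matrix.mul_sub, Matrix.sub_mul, Matrix.mul_one, Matrix.one_mul, e]
    abel
  have hPMt : P * (Q * A * Bih)ᵀ = 0 := by
    have e : N1 * (Q * A * Bih) * (Q * A * Bih)ᵀ = (Q * A * Bih)ᵀ := by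
      conv_lhs => rw [← p4]
      rw [← transpose_mul, ← Matrix.mul_assoc, p1]
    rw [hP, Matrix.sub_mul, Matrix.one_mul, e, sub_self]
  have hPfixv : ∀ v : Fin n → ℝ, (Q * A * Bih) *ᵥ v = 0 → P *ᵥ v = v := by
    intro v hv
    rw [hP, Matrix.sub_mulVec, Matrix.one_mulVec, ← Matrix.mulVec_mulVec, hv,
      Matrix.mulVec_zero, sub_zero]
  -- bridges
  have hMBh : ∀ v : Fin n → ℝ, (Q * A * Bih) *ᵥ (Bh *ᵥ v) = (Q * A) *ᵥ v := by
    intro v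
    rw [Matrix.mulVec_mulVec, Matrix.mul_assoc, hBihBh, Matrix.mul_one]
  have hWBh : ∀ v : Fin n → ℝ, (S * A * Bih) *ᵥ (Bh *ᵥ v) = (S * A) *ᵥ v := by
    intro v
    rw [Matrix.mulVec_mulVec, Matrix.mul_assoc, hBihBh, Matrix.mul_one]
  have hPBh : ∀ v : Fin n → ℝ, (Q * A) *ᵥ v = 0 → P *ᵥ (Bh *ᵥ v) = Bh *ᵥ v := by
    intro v hv
    exact hPfixv _ (by rw [hMBh, hv])
  -- G and its properties
  set G := S * A * Bih * P with hG
  have hGt : Gᵀ = P * Bih * Aᵀ * Sᵀ := by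
    rw [hG]
    simp only [transpose_mul, transpose_transpose, hPt, hBihsym, Matrix.mul_assoc]
  have hPPv : ∀ X : Matrix (Fin n) (Fin l) ℝ, P * (P * X) = P * X := by
    intro X; rw [← Matrix.mul_assoc, hPP]
  have hHeq : G * Bih * Aᵀ * Sᵀ = G * Gᵀ := by
    rw [hGt, hG]
    simp only [Matrix.mul_assoc]
    rw [hPPv]
  obtain ⟨q1, q2, q3, q4⟩ := hN2
  rw [show S * A * Bih * P * Bih * Aᵀ * Sᵀ = G * Bih * Aᵀ * Sᵀ from by rw [hG], hHeq]
    at q1 q4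
  have hfix : Gᵀ * N2 * (G * Gᵀ) = Gᵀ := pinv_fix G (G * Gᵀ) N2 rfl q1 q4
  have hZeq : Z = Gᵀ * N2 * G := by rw [hZ, ← hGt]
  have hZGt : Z * Gᵀ = Gᵀ := by
    rw [hZeq, Matrix.mul_assoc (Gᵀ * N2) G Gᵀ]
    exact hfix
  -- constraint differences
  have hQAxstar : (Q * A) *ᵥ xstar = Q *ᵥ b := by
    rw [← Matrix.mulVec_mulVec, hxstar_sol]
  have hSAxstar : (S * A) *ᵥ xstar = S *ᵥ b := by
    rw [← Matrix.mulVec_mulVec, hxstar_sol]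
  have hQd1 : (Q * A) *ᵥ (xk1 - xstar) = 0 := by
    rw [Matrix.mulVec_sub, hxk1Q, hQAxstar, sub_self]
  have hSd1 : (S * A) *ᵥ (xk1 - xstar) = 0 := by
    rw [Matrix.mulVec_sub, hxk1S, hSAxstar, sub_self]
  have hQd2 : (Q * A) *ᵥ (xk1 - xk) = 0 := by
    rw [Matrix.mulVec_sub, hxk1Q, hxk, sub_self]
  -- key1 : Z annihilates Bh (xk1 - xstar)
  have hGv : G *ᵥ (Bh *ᵥ (xk1 - xstar)) = 0 := by
    rw [hG, ← Matrix.mulVec_mulVec, hPBh _ hQd1, hWBh, hSd1]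
  have key1 : Z *ᵥ (Bh *ᵥ (xk1 - xstar)) = 0 := by
    rw [hZeq, ← Matrix.mulVec_mulVec, hGv, Matrix.mulVec_zero]
  -- orthogonality from minimality
  have hBsym : Bᵀ = B := by rw [← conj_eq]; exact hB.1
  have hsym : ∀ u w : Fin n → ℝ, u ⬝ᵥ (B *ᵥ w) = w ⬝ᵥ (B *ᵥ u) := by
    intro u w
    rw [Matrix.dotProduct_mulVec, ← Matrix.mulVec_transpose, hBsym, dotProduct_comm]
  have horth : ∀ v : Fin n → ℝ, (S * A) *ᵥ v = 0 → (Q * A) *ᵥ v = 0 →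
      (B *ᵥ (xk1 - xk)) ⬝ᵥ v = 0 := by
    intro v hSv hQv
    set c := v ⬝ᵥ (B *ᵥ (xk1 - xk)) with hc
    set q := v ⬝ᵥ (B *ᵥ v) with hqdef
    have hq : 0 ≤ q := by
      have := hB.posSemidef.dotProduct_mulVec_nonneg v
      simpa [hqdef] using this
    have key : ∀ t : ℝ, 0 ≤ 2*t*c + t^2*q := by
      intro t
      have hSy : (S * A) *ᵥ (xk1 + t • v) = S *ᵥ b := by
        rw [Matrix.mulVec_add, Matrix.mulVec_smul, hSv, smul_zero, add_zero, hxk1S]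
      have hQy : (Q * A) *ᵥ (xk1 + t • v) = Q *ᵥ b := by
        rw [Matrix.mulVec_add, Matrix.mulVec_smul, hQv, smul_zero, add_zero, hxk1Q]
      have hy := hxk1min (xk1 + t • v) hSy hQy
      have hrw : xk1 + t • v - xk = (xk1 - xk) + t • v := by abel
      rw [hrw] at hy
      have expand : ((xk1 - xk) + t • v) ⬝ᵥ (B *ᵥ ((xk1 - xk) + t • v))
          = (xk1 - xk) ⬝ᵥ (B *ᵥ (xk1 - xk)) + 2*t*c + t^2*q := by
        rw [Matrix.mulVec_add, Matrix.mulVec_smul, dotProduct_add,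
          add_dotProduct, add_dotProduct, smul_dotProduct,
          dotProduct_smul, smul_dotProduct]
        have hsy : (xk1 - xk) ⬝ᵥ (B *ᵥ v) = c := by rw [hc]; exact hsym _ _
        rw [dotProduct_smul, hsy, ← hc, ← hqdef]
        simp only [smul_eq_mul]
        ring
      rw [expand] at hy
      linarith
    have hc0 := quad_zero c q hq key
    rw [hc] at hc0
    rw [dotProduct_comm]
    exact hc0
  obtain ⟨y, z, hyz⟩ := mem_sum_ranges (S * A) (Q * A) (B *ᵥ (xk1 - xk)) horth
  -- dlt := Bh (xk1 - xk) lies in range Gᵀ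
  set dlt := Bh *ᵥ (xk1 - xk) with hdlt
  have hdlt1 : dlt = Bih *ᵥ (B *ᵥ (xk1 - xk)) := by
    rw [hdlt, Matrix.mulVec_mulVec, hBihB]
  have hPSA : P * (Bih * (S * A)ᵀ) = Gᵀ := by
    rw [hGt]
    simp only [transpose_mul, Matrix.mul_assoc]
  have hPQA : P * (Bih * (Q * A)ᵀ) = 0 := by
    have e : Bih * (Q * A)ᵀ = (Q * A * Bih)ᵀ := by
      simp only [transpose_mul, hBihsym, Matrix.mul_assoc]
    rw [e, hPMt]
  have hdltG : dlt = Gᵀ *ᵥ y := by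
    have hPdlt : P *ᵥ dlt = dlt := by
      rw [hdlt]; exact hPBh _ hQd2
    calc dlt = P *ᵥ dlt := hPdlt.symm
    _ = P *ᵥ (Bih *ᵥ ((S * A)ᵀ *ᵥ y + (Q * A)ᵀ *ᵥ z)) := by rw [hdlt1, hyz]
    _ = (P * (Bih * (S * A)ᵀ)) *ᵥ y + (P * (Bih * (Q * A)ᵀ)) *ᵥ z := by
        rw [Matrix.mulVec_add, Matrix.mulVec_add, Matrix.mulVec_mulVec,
          Matrix.mulVec_mulVec, Matrix.mulVec_mulVec, Matrix.mulVec_mulVec,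
          Matrix.mul_assoc, Matrix.mul_assoc]
    _ = Gᵀ *ᵥ y := by rw [hPSA, hPQA, Matrix.zero_mulVec, add_zero]
  have key2 : Z *ᵥ dlt = dlt := by
    rw [hdltG, Matrix.mulVec_mulVec, hZGt]
  -- final assembly
  have hsplit : Bh *ᵥ (xk - xstar) = Bh *ᵥ (xk1 - xstar) - dlt := by
    rw [hdlt, ← Matrix.mulVec_sub]
    congr 1
    abel
  have hZrk : Z *ᵥ (Bh *ᵥ (xk - xstar)) = -dlt := by
    rw [hsplit, Matrix.mulVec_sub, key1, key2, zero_sub]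
  rw [Matrix.sub_mulVec, Matrix.one_mulVec, hZrk, hsplit]
  abel
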